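/- Let α ∈ (0,1), μ ∈ (0,1], T > 0, and let g, J : [0,T] → ℝ be nonnegative with g locally integrable and J continuous, and let h ≥ 0 be a constant. If g(t) ≤ J(t) + h ∫₀ᵗ exp((μ−1)/μ · (t−s)) (t−s)^{α−1} g(s) ds for all t ∈ [0,T], and J is nondecreasing on [0,T], then g(t) ≤ J(t) · E_α(h Γ(α) t^α) for all t ∈ [0,T], where E_α(x) = Σ_{k=0}^∞ x^k / Γ(αk + 1) is the one-parameter Mittag-Leffler function. -/

import Mathlib

open MeasureTheory Set Filter Nat
open scoped ENNReal


lemma grw_beta_intable (a b : ℝ) (ha : 0 < a) (hb : 0 < b) :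
    IntervalIntegrable (fun x : ℝ => x ^ (a - 1) * (1 - x) ^ (b - 1)) volume 0 1 := by
  have h := (Complex.betaIntegral_convergent (u := a) (v := b) (by simpa) (by simpa)).norm
  apply h.congr_ae
  rw [uIoc_of_le (by norm_num : (0:ℝ) ≤ 1)]
  have hne : ∀ᵐ x : ℝ ∂(volume.restrict (Ioc (0:ℝ) 1)), x ≠ 1 :=
    ae_restrict_of_ae (by simp [ae_iff])
  filter_upwards [ae_restrict_mem measurableSet_Ioc, hne] with x hx hx1
  have h1 : ((1:ℂ) - (x:ℂ)) = ((1 - x : ℝ) : ℂ) := by push_cast; ring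
  rw [norm_mul, h1,
    Complex.norm_cpow_eq_rpow_re_of_pos hx.1,
    Complex.norm_cpow_eq_rpow_re_of_pos
      (by rcases lt_or_eq_of_le hx.2 with h'|h' <;> [linarith; exact absurd h' hx1])]
  norm_num

lemma grw_beta_val (a b : ℝ) (ha : 0 < a) (hb : 0 < b) :
    ∫ x in (0:ℝ)..1, x ^ (a - 1) * (1 - x) ^ (b - 1) =
      Real.Gamma a * Real.Gamma b / Real.Gamma (a + b) := by
  have h := Complex.Gamma_mul_Gamma_eq_betaIntegral (s := a) (t := b) (by simpa) (by simpa)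
  have hI : Complex.betaIntegral a b = ((∫ x in (0:ℝ)..1, x ^ (a - 1) * (1 - x) ^ (b - 1) : ℝ) : ℂ) := by
    rw [Complex.betaIntegral, ← intervalIntegral.integral_ofReal]
    refine intervalIntegral.integral_congr fun x hx => ?_
    rw [uIcc_of_le (by norm_num)] at hx
    push_cast
    rw [Complex.ofReal_cpow hx.1, Complex.ofReal_cpow (by linarith [hx.2])]
    push_cast
    ring
  rw [hI, ← Complex.ofReal_add, Complex.Gamma_ofReal, Complex.Gamma_ofReal, Complex.Gamma_ofReal,
    ← Complex.ofReal_mul, ← Complex.ofReal_mul] at h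
  have := Complex.ofReal_inj.mp h
  have hG : Real.Gamma (a + b) ≠ 0 := (Real.Gamma_pos_of_pos (by linarith)).ne'
  field_simp [this]
  linarith [this]

-- scaled integrand equality
lemma grw_Feq (a b u t c : ℝ) (hc : c = t - u) (s : ℝ) (hs : s ∈ Icc u t) (hut : u < t) :
    (t - s) ^ (b - 1) * (s - u) ^ (a - 1)
      = c ^ (a + b - 2) * (((s - u) * c⁻¹) ^ (a - 1) * (1 - (s - u) * c⁻¹) ^ (b - 1)) := by
  have hc0 : 0 < c := by rw [hc]; linarith
  have hy0 : 0 ≤ (s - u) * c⁻¹ := mul_nonneg (by linarith [hs.1]) (by positivity)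
  have hy1 : 0 ≤ 1 - (s - u) * c⁻¹ := by
    rw [sub_nonneg]
    rw [mul_inv_le_iff₀ hc0, one_mul, hc]
    linarith [hs.2]
  set y := (s - u) * c⁻¹ with hy
  have e2 : s - u = c * y := by rw [hy]; field_simp
  have e1 : t - s = c * (1 - y) := by
    rw [mul_sub, mul_one, ← e2, hc]; ring
  rw [e1, e2, Real.mul_rpow hc0.le hy1, Real.mul_rpow hc0.le hy0]
  rw [show c ^ (b-1) * (1-y) ^ (b-1) * (c ^ (a-1) * y ^ (a-1))
      = c ^ (b-1) * c ^ (a-1) * (y ^ (a-1) * (1-y) ^ (b-1)) from by ring,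
    ← Real.rpow_add hc0]
  ring_nf

lemma grw_scaled_intable (a b u t : ℝ) (ha : 0 < a) (hb : 0 < b) (hut : u < t) :
    IntegrableOn (fun s => (t - s) ^ (b - 1) * (s - u) ^ (a - 1)) (Ioc u t) := by
  set c := t - u with hc
  have hc0 : 0 < c := by simp [hc]; linarith
  have I1 := ((grw_beta_intable a b ha hb).comp_mul_right (c := c⁻¹)).comp_sub_right u
  rw [show (0:ℝ) / c⁻¹ + u = u by field_simp; ring, show (1:ℝ) / c⁻¹ + u = t by rw [one_div, inv_inv, hc]; ring] at I1
  rw [intervalIntegrable_iff_integrableOn_Ioc_of_le hut.le] at I1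
  refine (I1.const_mul (c ^ (a + b - 2))).congr ?_
  filter_upwards [ae_restrict_mem measurableSet_Ioc] with s hs
  exact (grw_Feq a b u t c hc s (Ioc_subset_Icc_self hs) hut).symm

lemma grw_scaled_val (a b u t : ℝ) (ha : 0 < a) (hb : 0 < b) (hut : u < t) :
    ∫ s in u..t, (t - s) ^ (b - 1) * (s - u) ^ (a - 1)
      = (t - u) ^ (a + b - 1) * (Real.Gamma a * Real.Gamma b / Real.Gamma (a + b)) := by
  set c := t - u with hc
  have hc0 : 0 < c := by simp [hc]; linarith
  have key := intervalIntegral.integral_comp_mul_add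
    (fun s => (t - s) ^ (b - 1) * (s - u) ^ (a - 1)) hc0.ne' u (a := 0) (b := 1)
  rw [mul_zero, zero_add, mul_one, show c + u = t by rw [hc]; ring] at key
  have key2 : ∀ y ∈ uIcc (0:ℝ) 1,
      (t - (c * y + u)) ^ (b - 1) * (c * y + u - u) ^ (a - 1)
        = c ^ (a + b - 2) * (y ^ (a - 1) * (1 - y) ^ (b - 1)) := by
    intro y hy
    rw [uIcc_of_le (by norm_num)] at hy
    have := grw_Feq a b u t c hc (c * y + u) ?_ hut
    · rw [this]
      congr 2 <;> rw [show c * y + u - u = c * y by ring] <;>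
        rw [show c * y * c⁻¹ = y by field_simp]
    · constructor
      · nlinarith [hy.1]
      · have : c * y ≤ c * 1 := by nlinarith [hy.2]
        simp [hc] at this ⊢; nlinarith
  rw [intervalIntegral.integral_congr key2] at key
  rw [intervalIntegral.integral_const_mul, grw_beta_val a b ha hb] at key
  have : (∫ s in u..t, (t - s) ^ (b - 1) * (s - u) ^ (a - 1)) = c • (c⁻¹ • (∫ s in u..t, (t - s) ^ (b - 1) * (s - u) ^ (a - 1))) := by
    rw [smul_smul, mul_inv_cancel₀ hc0.ne', one_smul]
  have hcc : c ^ (a + b - 2) * c = c ^ (a + b - 1) := by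
    rw [← Real.rpow_add_one hc0.ne']; congr 1; ring
  rw [this, ← key, smul_eq_mul, ← mul_assoc, mul_comm c (c ^ (a + b - 2)), hcc]

lemma grw_lint_beta (a b u t : ℝ) (ha : 0 < a) (hb : 0 < b) (hut : u < t) :
    ∫⁻ s in Ioo u t, ENNReal.ofReal ((t - s) ^ (b - 1) * (s - u) ^ (a - 1))
      = ENNReal.ofReal ((t - u) ^ (a + b - 1) * (Real.Gamma a * Real.Gamma b / Real.Gamma (a + b))) := by
  rw [Measure.restrict_congr_set Ioo_ae_eq_Ioc]
  rw [← ofReal_integral_eq_lintegral_ofReal (grw_scaled_intable a b u t ha hb hut)]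
  · rw [← intervalIntegral.integral_of_le hut.le, grw_scaled_val a b u t ha hb hut]
  · filter_upwards [ae_restrict_mem measurableSet_Ioc] with s hs
    have h1 : 0 ≤ t - s := by linarith [hs.2]
    have h2 : 0 ≤ s - u := by linarith [hs.1]
    positivity

lemma grw_lint_pow (c t : ℝ) (hc : 0 < c) (ht : 0 < t) :
    ∫⁻ s in Ioo 0 t, ENNReal.ofReal ((t - s) ^ (c - 1)) = ENNReal.ofReal (t ^ c / c) := by
  rw [Measure.restrict_congr_set Ioo_ae_eq_Ioc]
  have hint : IntegrableOn (fun s : ℝ => (t - s) ^ (c - 1)) (Ioc 0 t) := by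
    have h1 : IntervalIntegrable (fun x : ℝ => x ^ (c - 1)) volume 0 t :=
      intervalIntegral.intervalIntegrable_rpow' (by linarith)
    have h2 := h1.comp_sub_left t
    rw [sub_zero, sub_self] at h2
    rw [← intervalIntegrable_iff_integrableOn_Ioc_of_le ht.le]
    exact h2.symm
  rw [← ofReal_integral_eq_lintegral_ofReal hint]
  · rw [← intervalIntegral.integral_of_le ht.le]
    have h3 := intervalIntegral.integral_comp_sub_left (a := 0) (b := t) (fun x : ℝ => x ^ (c - 1)) t
    rw [sub_zero, sub_self] at h3
    rw [h3, integral_rpow (Or.inl (by linarith))]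
    rw [Real.zero_rpow (by linarith : c - 1 + 1 ≠ 0), sub_add_cancel]
    ring
  · filter_upwards [ae_restrict_mem measurableSet_Ioc] with s hs
    have h1 : 0 ≤ t - s := by linarith [hs.2]
    positivity

lemma grw_swap (G : ℝ → ℝ≥0∞) (hG : Measurable G) (a b t : ℝ)
    (ha : 0 < a) (hb : 0 < b) (ht : 0 < t) :
    ∫⁻ s in Ioo 0 t, ENNReal.ofReal ((t - s) ^ (b - 1)) *
        ∫⁻ u in Ioo 0 s, ENNReal.ofReal ((s - u) ^ (a - 1)) * G u
      = ENNReal.ofReal (Real.Gamma a * Real.Gamma b / Real.Gamma (a + b)) *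
        ∫⁻ u in Ioo 0 t, ENNReal.ofReal ((t - u) ^ (a + b - 1)) * G u := by
  set S : Set (ℝ × ℝ) := {p : ℝ × ℝ | 0 < p.2 ∧ p.2 < p.1 ∧ p.1 < t} with hS
  have hSm : MeasurableSet S := by
    rw [hS, show {p : ℝ × ℝ | 0 < p.2 ∧ p.2 < p.1 ∧ p.1 < t}
        = {p : ℝ × ℝ | 0 < p.2} ∩ ({p : ℝ × ℝ | p.2 < p.1} ∩ {p : ℝ × ℝ | p.1 < t}) from rfl]
    exact (measurableSet_lt measurable_const measurable_snd).inter
      ((measurableSet_lt measurable_snd measurable_fst).inter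
        (measurableSet_lt measurable_fst measurable_const))
  set F : ℝ × ℝ → ℝ≥0∞ := fun p =>
    S.indicator (fun p => ENNReal.ofReal ((t - p.1) ^ (b - 1)) *
      (ENNReal.ofReal ((p.1 - p.2) ^ (a - 1)) * G p.2)) p with hF
  have hFm : Measurable F := by
    apply Measurable.indicator _ hSm
    fun_prop
  have lhs_eq : (∫⁻ s in Ioo 0 t, ENNReal.ofReal ((t - s) ^ (b - 1)) *
        ∫⁻ u in Ioo 0 s, ENNReal.ofReal ((s - u) ^ (a - 1)) * G u)
      = ∫⁻ s, ∫⁻ u, F (s, u) := by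
    rw [← lintegral_indicator measurableSet_Ioo]
    congr 1
    funext s
    by_cases hs : s ∈ Ioo 0 t
    · rw [indicator_of_mem hs]
      have : (fun u => F (s, u)) = (Ioo 0 s).indicator
          (fun u => ENNReal.ofReal ((t - s) ^ (b - 1)) *
            (ENNReal.ofReal ((s - u) ^ (a - 1)) * G u)) := by
        funext u
        by_cases hu : u ∈ Ioo 0 s
        · rw [indicator_of_mem hu]
          simp only [hF]
          rw [indicator_of_mem]
          exact ⟨hu.1, hu.2, hs.2⟩
        · rw [indicator_of_notMem hu]
          simp only [hF]
          rw [indicator_of_notMem]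
          intro hmem
          exact hu ⟨hmem.1, hmem.2.1⟩
      rw [this, lintegral_indicator measurableSet_Ioo,
        lintegral_const_mul' _ _ ENNReal.ofReal_ne_top]
    · rw [indicator_of_notMem hs]
      have : ∀ u, F (s, u) = 0 := by
        intro u
        simp only [hF]
        rw [indicator_of_notMem]
        intro hmem
        exact hs ⟨lt_trans hmem.1 hmem.2.1, hmem.2.2⟩
      simp [this]
  rw [lhs_eq, lintegral_lintegral_swap hFm.aemeasurable]
  have inner_eq : ∀ u, (∫⁻ s, F (s, u)) = (Ioo 0 t).indicator (fun u =>
      (ENNReal.ofReal (Real.Gamma a * Real.Gamma b / Real.Gamma (a + b)) *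
        (ENNReal.ofReal ((t - u) ^ (a + b - 1)) * G u))) u := by
    intro u
    by_cases hu : u ∈ Ioo 0 t
    · rw [indicator_of_mem hu]
      have : (fun s => F (s, u)) = (Ioo u t).indicator
          (fun s => G u * ENNReal.ofReal ((t - s) ^ (b - 1) * (s - u) ^ (a - 1))) := by
        funext s
        by_cases hsu : s ∈ Ioo u t
        · rw [indicator_of_mem hsu]
          simp only [hF]
          rw [indicator_of_mem (show (s,u) ∈ S from ⟨hu.1, hsu.1, hsu.2⟩)]
          have h1 : 0 ≤ (t - s) ^ (b - 1) := by
            have : 0 ≤ t - s := by linarith [hsu.2]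
            positivity
          have h2 : 0 ≤ (s - u) ^ (a - 1) := by
            have : 0 ≤ s - u := by linarith [hsu.1]
            positivity
          rw [ENNReal.ofReal_mul h1]
          ring
        · rw [indicator_of_notMem hsu]
          simp only [hF]
          rw [indicator_of_notMem]
          intro hmem
          exact hsu ⟨hmem.2.1, hmem.2.2⟩
      rw [this, lintegral_indicator measurableSet_Ioo,
        lintegral_const_mul _ (by fun_prop),
        grw_lint_beta a b u t ha hb hu.2]
      rw [ENNReal.ofReal_mul (by
        have : 0 ≤ t - u := by linarith [hu.2]
        positivity : (0:ℝ) ≤ (t-u)^(a+b-1))]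
      ring
    · rw [indicator_of_notMem hu]
      have : ∀ s, F (s, u) = 0 := by
        intro s
        simp only [hF]
        rw [indicator_of_notMem]
        intro hmem
        exact hu ⟨hmem.1, lt_trans hmem.2.1 hmem.2.2⟩
      simp [this]
  calc (∫⁻ u, ∫⁻ s, F (s, u)) = ∫⁻ u, (Ioo 0 t).indicator (fun u =>
      (ENNReal.ofReal (Real.Gamma a * Real.Gamma b / Real.Gamma (a + b)) *
        (ENNReal.ofReal ((t - u) ^ (a + b - 1)) * G u))) u := by
        congr 1; funext u; exact inner_eq u
    _ = ∫⁻ u in Ioo 0 t, ENNReal.ofReal (Real.Gamma a * Real.Gamma b / Real.Gamma (a + b)) *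
        (ENNReal.ofReal ((t - u) ^ (a + b - 1)) * G u) := lintegral_indicator measurableSet_Ioo _
    _ = ENNReal.ofReal (Real.Gamma a * Real.Gamma b / Real.Gamma (a + b)) *
        ∫⁻ u in Ioo 0 t, ENNReal.ofReal ((t - u) ^ (a + b - 1)) * G u :=
      lintegral_const_mul' _ _ ENNReal.ofReal_ne_top


lemma grw_key_bound (a x : ℝ) (ha : 0 < a) (hx : 0 ≤ x) :
    ∃ N : ℕ, ∀ n ≥ N, ((n:ℝ) + 1) * x ^ n / Real.Gamma (a * n + 1) ≤ (1/2) ^ n := by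
  set z := max x 1 with hz
  have hz1 : 1 ≤ z := le_max_right _ _
  have hxz : x ≤ z := le_max_left _ _
  set w := 2 * z with hw
  have hw1 : (1:ℝ) ≤ w := by rw [hw]; linarith
  set p := ⌈2 / a⌉₊ + 1 with hp
  have hp1 : (1:ℕ) ≤ p := by omega
  have hpa : 2 / a ≤ p := by
    rw [hp]; push_cast; linarith [Nat.le_ceil (2 / a)]
  set V := w ^ p with hV
  have hV1 : (1:ℝ) ≤ V := one_le_pow₀ hw1
  -- eventually m! ≥ (2^p * V)^m
  have htend : Tendsto (fun m : ℕ => ((2:ℝ) ^ p * V) ^ m / (m ! : ℝ)) atTop (nhds 0) :=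
    (Real.summable_pow_div_factorial ((2:ℝ) ^ p * V)).tendsto_atTop_zero
  have hev : ∀ᶠ m : ℕ in atTop, ((2:ℝ) ^ p * V) ^ m / (m ! : ℝ) ≤ 1 :=
    htend.eventually_le_const (by norm_num)
  obtain ⟨M₀, hM₀⟩ := eventually_atTop.mp hev
  refine ⟨⌈((M₀:ℝ) + 3) / a⌉₊, fun n hn => ?_⟩
  have han : (M₀:ℝ) + 3 ≤ a * n := by
    have h1 : ((M₀:ℝ) + 3) / a ≤ ⌈((M₀:ℝ) + 3) / a⌉₊ := Nat.le_ceil _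
    have h2 : (⌈((M₀:ℝ) + 3) / a⌉₊ : ℝ) ≤ n := by exact_mod_cast hn
    calc (M₀:ℝ) + 3 = ((M₀:ℝ) + 3) / a * a := by field_simp
    _ ≤ (n:ℝ) * a := by apply mul_le_mul_of_nonneg_right (h1.trans h2) ha.le
    _ = a * n := by ring
  set m := ⌊a * n⌋₊ with hm
  have hm0 : (0:ℝ) ≤ a * n := by positivity
  have hmle : (m:ℝ) ≤ a * n := Nat.floor_le hm0
  have hmge : (a:ℝ) * n - 1 ≤ m := by
    have := Nat.lt_floor_add_one (a * n)
    linarith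
  have hmM : M₀ ≤ m := by
    have : (M₀:ℝ) ≤ m := by linarith
    exact_mod_cast this
  have hm2 : (2:ℝ) ≤ a * n := by linarith [Nat.cast_nonneg (α := ℝ) M₀]
  -- Gamma lower bound
  have hΓ : (m ! : ℝ) ≤ Real.Gamma (a * n + 1) := by
    rw [← Real.Gamma_nat_eq_factorial]
    apply Real.Gamma_strictMonoOn_Ici.monotoneOn
    · simp only [mem_Ici]
      have : (1:ℝ) ≤ m := by linarith
      push_cast; linarith
    · simp only [mem_Ici]; linarith
    · push_cast; linarith
  have hΓpos : 0 < Real.Gamma (a * n + 1) := Real.Gamma_pos_of_pos (by linarith)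
  have hfacpos : (0:ℝ) < m ! := by exact_mod_cast Nat.factorial_pos m
  -- numerator bound
  have hnum : ((n:ℝ) + 1) * x ^ n ≤ w ^ n := by
    have h1 : ((n:ℝ) + 1) ≤ 2 ^ n := by
      exact_mod_cast Nat.lt_two_pow_self (n := n)
    have h2 : x ^ n ≤ z ^ n := pow_le_pow_left₀ hx hxz n
    calc ((n:ℝ) + 1) * x ^ n ≤ 2 ^ n * z ^ n :=
        mul_le_mul h1 h2 (by positivity) (by positivity)
      _ = w ^ n := by rw [hw, mul_pow]
  -- n ≤ p * m
  have hnpm : n ≤ p * m := by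
    have h1 : (n:ℝ) ≤ (2 / a) * m := by
      rw [div_mul_eq_mul_div, le_div_iff₀ ha]
      nlinarith
    have h2 : ((n:ℝ)) ≤ (p:ℝ) * m := by
      calc (n:ℝ) ≤ (2/a) * m := h1
        _ ≤ (p:ℝ) * m := by
          apply mul_le_mul_of_nonneg_right hpa (Nat.cast_nonneg m)
    exact_mod_cast h2
  -- factorial lower bound
  have hfac : ((2:ℝ) ^ p * V) ^ m ≤ (m ! : ℝ) := by
    have := hM₀ m hmM
    rw [div_le_one hfacpos] at this
    exact this
  -- final chain
  have hwn : w ^ n ≤ V ^ m := by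
    calc w ^ n ≤ w ^ (p * m) := pow_le_pow_right₀ hw1 hnpm
      _ = (w ^ p) ^ m := by rw [pow_mul]
      _ = V ^ m := by rw [hV]
  have key : ((n:ℝ) + 1) * x ^ n / Real.Gamma (a * n + 1) ≤ V ^ m / (m ! : ℝ) := by
    apply div_le_div₀ (by positivity) (hnum.trans hwn) hfacpos hΓ
  have last : V ^ m / (m ! : ℝ) ≤ (1/2) ^ n := by
    have h3 : V ^ m / (m ! : ℝ) ≤ V ^ m / ((2:ℝ) ^ p * V) ^ m :=
      div_le_div_of_nonneg_left (by positivity) (by positivity) hfac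
    have h4 : V ^ m / ((2:ℝ) ^ p * V) ^ m = (1/2 : ℝ) ^ (p * m) := by
      have he : ((2:ℝ) ^ p * V) ^ m = 2 ^ (p * m) * V ^ m := by rw [mul_pow, pow_mul]
      have hv : (0:ℝ) < V ^ m := by positivity
      rw [he, div_pow, one_pow]
      rw [eq_div_iff (by positivity)]
      field_simp
    have h5 : ((1:ℝ)/2) ^ (p * m) ≤ (1/2) ^ n :=
      pow_le_pow_of_le_one (by norm_num) (by norm_num) hnpm
    calc V ^ m / (m ! : ℝ) ≤ V ^ m / ((2:ℝ) ^ p * V) ^ m := h3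
      _ = (1/2:ℝ) ^ (p * m) := h4
      _ ≤ (1/2) ^ n := h5
  exact key.trans last

lemma grw_summable (a x : ℝ) (ha : 0 < a) (hx : 0 ≤ x) :
    Summable (fun n : ℕ => x ^ n / Real.Gamma (a * n + 1)) := by
  obtain ⟨N, hN⟩ := grw_key_bound a x ha hx
  rw [← summable_nat_add_iff N]
  have hgeo : Summable (fun n : ℕ => ((1:ℝ)/2) ^ (n + N)) := by
    apply Summable.comp_injective (summable_geometric_of_lt_one (by norm_num) (by norm_num))
    exact fun i j hij => by omega
  apply Summable.of_nonneg_of_le _ _ hgeo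
  · intro n
    have := Real.Gamma_pos_of_pos (show (0:ℝ) < a * (n + N) + 1 by positivity)
    positivity
  · intro n
    refine le_trans ?_ (hN (n + N) (by omega))
    have hΓ := Real.Gamma_pos_of_pos (show (0:ℝ) < a * ((n + N : ℕ) : ℝ) + 1 by positivity)
    gcongr
    nlinarith [pow_nonneg hx (n + N), Nat.cast_nonneg (α := ℝ) (n + N)]

lemma grw_tendsto (a x : ℝ) (ha : 0 < a) (hx : 0 ≤ x) :
    Filter.Tendsto (fun n : ℕ => ((n:ℝ) + 1) * x ^ n / Real.Gamma (a * n + 1))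
      Filter.atTop (nhds 0) := by
  obtain ⟨N, hN⟩ := grw_key_bound a x ha hx
  apply squeeze_zero'
  · filter_upwards with n
    have := Real.Gamma_pos_of_pos (show (0:ℝ) < a * n + 1 by positivity)
    positivity
  · filter_upwards [Filter.eventually_atTop.mpr ⟨N, hN⟩] with n hn using hn
  · exact tendsto_pow_atTop_nhds_zero_of_lt_one (by norm_num) (by norm_num)


set_option maxHeartbeats 1600000 in
theorem stmt_2 (α μ T h : ℝ) (g J : ℝ → ℝ)
    (hα : α ∈ Set.Ioo (0:ℝ) 1) (hμ : μ ∈ Set.Ioc (0:ℝ) 1) (hT : 0 < T)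
    (hg0 : ∀ t ∈ Set.Icc (0:ℝ) T, 0 ≤ g t)
    (hJ0 : ∀ t ∈ Set.Icc (0:ℝ) T, 0 ≤ J t)
    (hgint : MeasureTheory.IntegrableOn g (Set.Icc 0 T))
    (hJcont : ContinuousOn J (Set.Icc 0 T))
    (hh : 0 ≤ h)
    (hJmono : MonotoneOn J (Set.Icc 0 T))
    (hineq : ∀ t ∈ Set.Icc (0:ℝ) T,
      g t ≤ J t + h * ∫ s in (0:ℝ)..t,
        Real.exp ((μ - 1) / μ * (t - s)) * (t - s) ^ (α - 1) * g s) :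
    ∀ t ∈ Set.Icc (0:ℝ) T,
      g t ≤ J t * ∑' k : ℕ, (h * Real.Gamma α * t ^ α) ^ k / Real.Gamma (α * k + 1) := by
  obtain ⟨hα0, hα1⟩ := hα
  obtain ⟨hμ0, hμ1⟩ := hμ
  have hΓα : 0 < Real.Gamma α := Real.Gamma_pos_of_pos hα0
  intro t₀ ht₀
  rcases eq_or_lt_of_le ht₀.1 with ht₀0 | ht₀pos
  · -- t₀ = 0
    have ht0 : t₀ = 0 := ht₀0.symm
    subst ht0
    have hx0 : h * Real.Gamma α * (0:ℝ) ^ α = 0 := by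
      rw [Real.zero_rpow hα0.ne']; ring
    rw [hx0]
    have htsum : ∑' k : ℕ, (0:ℝ) ^ k / Real.Gamma (α * k + 1) = 1 := by
      rw [tsum_eq_single 0]
      · norm_num [Real.Gamma_one]
      · intro k hk
        rw [zero_pow hk]
        simp
    rw [htsum, mul_one]
    have := hineq 0 ⟨le_refl 0, hT.le⟩
    rwa [intervalIntegral.integral_same, mul_zero, add_zero] at this
  · -- main case
    have ht₀T : t₀ ≤ T := ht₀.2
    set x := h * Real.Gamma α * t₀ ^ α with hxdef
    have htα : 0 ≤ t₀ ^ α := Real.rpow_nonneg ht₀.1 α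
    have hx0 : 0 ≤ x := by positivity
    have hsum : Summable (fun k : ℕ => x ^ k / Real.Gamma (α * k + 1)) :=
      grw_summable α x hα0 hx0
    set c := J t₀ with hcdef
    have hc0 : 0 ≤ c := hJ0 t₀ ht₀
    -- measurable representative
    have hgm := hgint.aestronglyMeasurable
    set gm := hgm.mk g with hgmdef
    have hgm_meas : StronglyMeasurable gm := hgm.stronglyMeasurable_mk
    have hgg : g =ᵐ[volume.restrict (Icc 0 T)] gm := hgm.ae_eq_mk
    set G : ℝ → ℝ≥0∞ := fun s => ENNReal.ofReal (gm s) with hGdef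
    have hGmeas : Measurable G := hgm_meas.measurable.ennreal_ofReal
    have hggIoo : ∀ s, s ≤ T → g =ᵐ[volume.restrict (Ioo 0 s)] gm := by
      intro s hsT
      exact ae_restrict_of_ae_restrict_of_subset
        (show Ioo 0 s ⊆ Icc 0 T from fun u hu => ⟨hu.1.le, hu.2.le.trans hsT⟩) hgg
    -- base inequality in ENNReal
    have hbase : ∀ s ∈ Icc 0 t₀, ENNReal.ofReal (g s) ≤ ENNReal.ofReal c +
        ENNReal.ofReal h * ∫⁻ u in Ioo 0 s, ENNReal.ofReal ((s - u) ^ (α - 1)) * G u := by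
      intro s hs
      have hsT : s ∈ Icc 0 T := ⟨hs.1, hs.2.trans ht₀T⟩
      have h1 := hineq s hsT
      have hJs : J s ≤ c := hJmono hsT ht₀ hs.2
      have hIle : ENNReal.ofReal (h * ∫ u in (0:ℝ)..s,
          Real.exp ((μ - 1) / μ * (s - u)) * (s - u) ^ (α - 1) * g u) ≤
          ENNReal.ofReal h * ∫⁻ u in Ioo 0 s, ENNReal.ofReal ((s - u) ^ (α - 1)) * G u := by
        rw [ENNReal.ofReal_mul hh]
        apply _root_.mul_le_mul_right
        by_cases hint : IntegrableOn (fun u => Real.exp ((μ - 1) / μ * (s - u)) *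
            (s - u) ^ (α - 1) * g u) (Ioc 0 s)
        · rw [intervalIntegral.integral_of_le hs.1,
            ofReal_integral_eq_lintegral_ofReal hint ?nn]
          case nn =>
            filter_upwards [ae_restrict_mem measurableSet_Ioc] with u hu
            have hgu : 0 ≤ g u := hg0 u ⟨hu.1.le, hu.2.trans (hs.2.trans ht₀T)⟩
            have h2 : (0:ℝ) ≤ (s - u) ^ (α - 1) := Real.rpow_nonneg (by linarith [hu.2]) _
            positivity
          rw [← Measure.restrict_congr_set Ioo_ae_eq_Ioc]
          apply lintegral_mono_ae
          filter_upwards [ae_restrict_mem measurableSet_Ioo, hggIoo s (hs.2.trans ht₀T)]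
            with u hu hgu
          rw [hGdef]
          rw [← ENNReal.ofReal_mul (Real.rpow_nonneg (by linarith [hu.2]) _)]
          apply ENNReal.ofReal_le_ofReal
          rw [← hgu]
          have hexp : Real.exp ((μ - 1) / μ * (s - u)) ≤ 1 := by
            rw [Real.exp_le_one_iff]
            apply mul_nonpos_of_nonpos_of_nonneg
            · apply div_nonpos_of_nonpos_of_nonneg <;> linarith
            · linarith [hu.2]
          have hgu0 : 0 ≤ g u := hg0 u ⟨hu.1.le, hu.2.le.trans (hs.2.trans ht₀T)⟩
          have hk0 : (0:ℝ) ≤ (s - u) ^ (α - 1) := Real.rpow_nonneg (by linarith [hu.2]) _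
          nlinarith [mul_nonneg (sub_nonneg.mpr hexp) (mul_nonneg hk0 hgu0)]
        · rw [intervalIntegral.integral_undef]
          · simp
          · rw [intervalIntegrable_iff_integrableOn_Ioc_of_le hs.1]
            exact hint
      calc ENNReal.ofReal (g s) ≤ ENNReal.ofReal (J s + h * ∫ u in (0:ℝ)..s,
            Real.exp ((μ - 1) / μ * (s - u)) * (s - u) ^ (α - 1) * g u) :=
          ENNReal.ofReal_le_ofReal h1
        _ ≤ ENNReal.ofReal (J s) + ENNReal.ofReal (h * ∫ u in (0:ℝ)..s,
            Real.exp ((μ - 1) / μ * (s - u)) * (s - u) ^ (α - 1) * g u) :=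
          ENNReal.ofReal_add_le
        _ ≤ ENNReal.ofReal c + ENNReal.ofReal h *
            ∫⁻ u in Ioo 0 s, ENNReal.ofReal ((s - u) ^ (α - 1)) * G u :=
          add_le_add (ENNReal.ofReal_le_ofReal hJs) hIle
    have hterm0 : ∀ (s : ℝ), 0 ≤ s → ∀ k : ℕ,
        0 ≤ (h * Real.Gamma α) ^ k * s ^ (α * k) / Real.Gamma (α * k + 1) := by
      intro s hs k
      have h1 := Real.Gamma_pos_of_pos (show (0:ℝ) < α * k + 1 by positivity)
      have h2 := Real.rpow_nonneg hs (α * k)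
      positivity
    have hP : ∀ n : ℕ, 1 ≤ n → ∀ s ∈ Icc 0 t₀, ENNReal.ofReal (g s) ≤
        ENNReal.ofReal (c * ∑ k ∈ Finset.range n,
          (h * Real.Gamma α) ^ k * s ^ (α * k) / Real.Gamma (α * k + 1)) +
        ENNReal.ofReal (h ^ n * Real.Gamma α ^ n / Real.Gamma (α * n)) *
          ∫⁻ u in Ioo 0 s, ENNReal.ofReal ((s - u) ^ (α * n - 1)) * G u := by
      intro n hn
      induction n, hn using Nat.le_induction with
      | base =>
        intro s hs
        simp only [Nat.cast_one, mul_one, pow_one]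
        have e1 : c * ∑ k ∈ Finset.range 1,
            (h * Real.Gamma α) ^ k * s ^ (α * k) / Real.Gamma (α * k + 1) = c := by
          rw [Finset.sum_range_one]
          norm_num [Real.rpow_zero, Real.Gamma_one]
        rw [e1, show h * Real.Gamma α / Real.Gamma α = h from by field_simp]
        exact hbase s hs
      | succ n hn ih =>
        intro s hs
        have hn1 : (1:ℝ) ≤ (n:ℝ) := by exact_mod_cast hn
        have hαn : 0 < α * n := mul_pos hα0 (by linarith)
        have hΓαn : 0 < Real.Gamma (α * n) := Real.Gamma_pos_of_pos hαn
        have hcast : α * ((n+1 : ℕ) : ℝ) = α + α * n := by push_cast; ring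
        rcases eq_or_lt_of_le hs.1 with hs0 | hs0
        · -- s = 0
          have hs0' : s = 0 := hs0.symm
          subst hs0'
          have hIoo : Ioo (0:ℝ) 0 = ∅ := Ioo_self 0
          rw [hIoo, Measure.restrict_empty, lintegral_zero_measure, mul_zero, add_zero]
          have hb := hbase 0 ⟨le_refl 0, ht₀pos.le⟩
          rw [hIoo, Measure.restrict_empty, lintegral_zero_measure, mul_zero, add_zero] at hb
          refine hb.trans (ENNReal.ofReal_le_ofReal ?_)
          have h1 : (1:ℝ) ≤ ∑ k ∈ Finset.range (n+1),
              (h * Real.Gamma α) ^ k * (0:ℝ) ^ (α * k) / Real.Gamma (α * k + 1) := by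
            have h2 := Finset.single_le_sum (f := fun k : ℕ =>
              (h * Real.Gamma α) ^ k * (0:ℝ) ^ (α * k) / Real.Gamma (α * k + 1))
              (fun k _ => hterm0 0 le_rfl k) (Finset.mem_range.mpr (Nat.succ_pos n))
            calc (1:ℝ) = (h * Real.Gamma α) ^ 0 * (0:ℝ) ^ (α * (0:ℕ)) / Real.Gamma (α * (0:ℕ) + 1) := by
                  norm_num [Real.rpow_zero, Real.Gamma_one]
              _ ≤ _ := h2
          nlinarith
        · -- 0 < s
          have key := ih s hs
          have hmono : (∫⁻ u in Ioo 0 s, ENNReal.ofReal ((s - u) ^ (α * n - 1)) * G u) ≤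
              ∫⁻ u in Ioo 0 s, ENNReal.ofReal ((s - u) ^ (α * n - 1)) *
                (ENNReal.ofReal c + ENNReal.ofReal h *
                  ∫⁻ v in Ioo 0 u, ENNReal.ofReal ((u - v) ^ (α - 1)) * G v) := by
            apply lintegral_mono_ae
            filter_upwards [ae_restrict_mem measurableSet_Ioo,
              hggIoo s (hs.2.trans ht₀T)] with u hu hgu
            apply _root_.mul_le_mul_right
            have hb := hbase u ⟨hu.1.le, hu.2.le.trans hs.2⟩
            calc G u = ENNReal.ofReal (g u) := by rw [hGdef]; simp only; rw [hgu]
              _ ≤ _ := hb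
          have hsplit : (∫⁻ u in Ioo 0 s, ENNReal.ofReal ((s - u) ^ (α * n - 1)) *
                (ENNReal.ofReal c + ENNReal.ofReal h *
                  ∫⁻ v in Ioo 0 u, ENNReal.ofReal ((u - v) ^ (α - 1)) * G v))
              = ENNReal.ofReal c * ENNReal.ofReal (s ^ (α * n) / (α * n)) +
                ENNReal.ofReal h * (ENNReal.ofReal
                    (Real.Gamma α * Real.Gamma (α * n) / Real.Gamma (α + α * n)) *
                  ∫⁻ u in Ioo 0 s, ENNReal.ofReal ((s - u) ^ (α + α * n - 1)) * G u) := by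
            have e : ∀ u : ℝ, ENNReal.ofReal ((s - u) ^ (α * n - 1)) *
                (ENNReal.ofReal c + ENNReal.ofReal h *
                  ∫⁻ v in Ioo 0 u, ENNReal.ofReal ((u - v) ^ (α - 1)) * G v)
                = ENNReal.ofReal c * ENNReal.ofReal ((s - u) ^ (α * n - 1)) +
                  ENNReal.ofReal h * (ENNReal.ofReal ((s - u) ^ (α * n - 1)) *
                    ∫⁻ v in Ioo 0 u, ENNReal.ofReal ((u - v) ^ (α - 1)) * G v) := by
              intro u; ring
            simp only [e]
            rw [lintegral_add_left (by fun_prop),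
              lintegral_const_mul' _ _ ENNReal.ofReal_ne_top,
              lintegral_const_mul' _ _ ENNReal.ofReal_ne_top,
              grw_lint_pow (α * n) s hαn hs0,
              grw_swap G hGmeas α (α * n) s hα0 hαn hs0]
          -- combine
          have step2 : ENNReal.ofReal (g s) ≤
              ENNReal.ofReal (c * ∑ k ∈ Finset.range n,
                (h * Real.Gamma α) ^ k * s ^ (α * k) / Real.Gamma (α * k + 1)) +
              ENNReal.ofReal (h ^ n * Real.Gamma α ^ n / Real.Gamma (α * n)) *
                (ENNReal.ofReal c * ENNReal.ofReal (s ^ (α * n) / (α * n)) +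
                 ENNReal.ofReal h * (ENNReal.ofReal
                    (Real.Gamma α * Real.Gamma (α * n) / Real.Gamma (α + α * n)) *
                  ∫⁻ u in Ioo 0 s, ENNReal.ofReal ((s - u) ^ (α + α * n - 1)) * G u)) := by
            refine key.trans (add_le_add_right ?_ _)
            exact mul_le_mul_right (hmono.trans_eq hsplit) _
          -- algebraic rearrangement
          have hsα : 0 ≤ s ^ (α * n) := Real.rpow_nonneg hs.1 _
          have hbCn : 0 ≤ h ^ n * Real.Gamma α ^ n / Real.Gamma (α * n) := by positivity
          have hBpos : 0 ≤ Real.Gamma α * Real.Gamma (α * n) / Real.Gamma (α + α * n) := by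
            have := Real.Gamma_pos_of_pos (show (0:ℝ) < α + α * n by positivity)
            positivity
          have hA : ENNReal.ofReal (h ^ n * Real.Gamma α ^ n / Real.Gamma (α * n)) *
              (ENNReal.ofReal c * ENNReal.ofReal (s ^ (α * n) / (α * n)))
              = ENNReal.ofReal (h ^ n * Real.Gamma α ^ n / Real.Gamma (α * n) *
                  (c * (s ^ (α * n) / (α * n)))) := by
            rw [← ENNReal.ofReal_mul hc0, ← ENNReal.ofReal_mul hbCn]
          have hB : ENNReal.ofReal (h ^ n * Real.Gamma α ^ n / Real.Gamma (α * n)) *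
              (ENNReal.ofReal h * (ENNReal.ofReal
                  (Real.Gamma α * Real.Gamma (α * n) / Real.Gamma (α + α * n)) *
                ∫⁻ u in Ioo 0 s, ENNReal.ofReal ((s - u) ^ (α + α * n - 1)) * G u))
              = ENNReal.ofReal (h ^ n * Real.Gamma α ^ n / Real.Gamma (α * n) * h *
                  (Real.Gamma α * Real.Gamma (α * n) / Real.Gamma (α + α * n))) *
                ∫⁻ u in Ioo 0 s, ENNReal.ofReal ((s - u) ^ (α + α * n - 1)) * G u := by
            rw [ENNReal.ofReal_mul (by positivity : (0:ℝ) ≤ h ^ n * Real.Gamma α ^ n / Real.Gamma (α * n) * h),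
              ENNReal.ofReal_mul hbCn]
            ring
          -- real identities
          have idA : c * (∑ k ∈ Finset.range n,
                (h * Real.Gamma α) ^ k * s ^ (α * k) / Real.Gamma (α * k + 1)) +
              h ^ n * Real.Gamma α ^ n / Real.Gamma (α * n) * (c * (s ^ (α * n) / (α * n)))
              = c * ∑ k ∈ Finset.range (n+1),
                (h * Real.Gamma α) ^ k * s ^ (α * k) / Real.Gamma (α * k + 1) := by
            rw [Finset.sum_range_succ, mul_add]
            congr 1
            have hΓ1 : Real.Gamma (α * n + 1) = α * n * Real.Gamma (α * n) :=
              Real.Gamma_add_one hαn.ne'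
            push_cast
            rw [hΓ1, mul_pow]
            field_simp
          have idB : h ^ n * Real.Gamma α ^ n / Real.Gamma (α * n) * h *
              (Real.Gamma α * Real.Gamma (α * n) / Real.Gamma (α + α * n))
              = h ^ (n+1) * Real.Gamma α ^ (n+1) / Real.Gamma (α + α * n) := by
            field_simp
            ring
          calc ENNReal.ofReal (g s) ≤ _ := step2
            _ = ENNReal.ofReal (c * ∑ k ∈ Finset.range (n+1),
                  (h * Real.Gamma α) ^ k * s ^ (α * k) / Real.Gamma (α * k + 1)) +
                ENNReal.ofReal (h ^ (n+1) * Real.Gamma α ^ (n+1) / Real.Gamma (α + α * n)) *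
                  ∫⁻ u in Ioo 0 s, ENNReal.ofReal ((s - u) ^ (α + α * n - 1)) * G u := by
              rw [mul_add, hA, hB, ← add_assoc,
                ← ENNReal.ofReal_add (by positivity) (by positivity), idA, idB]
            _ = _ := by rw [hcast]
    -- final step at t₀
    set Mt := max 1 t₀ with hMtdef
    have hMt1 : (1:ℝ) ≤ Mt := le_max_left _ _
    have hMt0 : (0:ℝ) ≤ Mt := by linarith
    have ht₀Mt : t₀ ≤ Mt := le_max_right _ _
    have hgIoo : IntegrableOn g (Ioo 0 t₀) :=
      hgint.mono_set (fun u hu => ⟨hu.1.le, hu.2.le.trans ht₀T⟩)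
    set Ig := ∫ u in Ioo 0 t₀, g u with hIgdef
    have hnnIoo : 0 ≤ᵐ[volume.restrict (Ioo 0 t₀)] g := by
      filter_upwards [ae_restrict_mem measurableSet_Ioo] with u hu
      exact hg0 u ⟨hu.1.le, hu.2.le.trans ht₀T⟩
    have hIg0 : 0 ≤ Ig := integral_nonneg_of_ae hnnIoo
    have hGint : (∫⁻ u in Ioo 0 t₀, G u) = ENNReal.ofReal Ig := by
      rw [hIgdef, ofReal_integral_eq_lintegral_ofReal hgIoo hnnIoo]
      apply lintegral_congr_ae
      filter_upwards [hggIoo t₀ ht₀T] with u hu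
      rw [hGdef]; simp only; rw [hu]
    have hMtα : 0 ≤ Mt ^ α := Real.rpow_nonneg hMt0 α
    set y := h * Real.Gamma α * Mt ^ α with hydef
    have hy0 : 0 ≤ y := by positivity
    set E := ∑' k : ℕ, x ^ k / Real.Gamma (α * k + 1) with hEdef
    have hE0 : 0 ≤ E := tsum_nonneg (fun k => by
      have := Real.Gamma_pos_of_pos (show (0:ℝ) < α * k + 1 by positivity)
      positivity)
    have hpartial : ∀ n : ℕ, c * ∑ k ∈ Finset.range n,
        (h * Real.Gamma α) ^ k * t₀ ^ (α * k) / Real.Gamma (α * k + 1) ≤ c * E := by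
      intro n
      apply mul_le_mul_of_nonneg_left _ hc0
      have hterm_eq : ∀ k : ℕ, (h * Real.Gamma α) ^ k * t₀ ^ (α * k) / Real.Gamma (α * k + 1)
          = x ^ k / Real.Gamma (α * k + 1) := by
        intro k
        have ht : t₀ ^ (α * k) = (t₀ ^ α) ^ k := by
          rw [← Real.rpow_natCast (t₀ ^ α) k, ← Real.rpow_mul ht₀.1]
        rw [ht, hxdef]; ring
      calc ∑ k ∈ Finset.range n, (h * Real.Gamma α) ^ k * t₀ ^ (α * k) / Real.Gamma (α * k + 1)
          = ∑ k ∈ Finset.range n, x ^ k / Real.Gamma (α * k + 1) :=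
          Finset.sum_congr rfl (fun k _ => hterm_eq k)
        _ ≤ E := Summable.sum_le_tsum _ (fun k _ => by
            have := Real.Gamma_pos_of_pos (show (0:ℝ) < α * k + 1 by positivity)
            positivity) hsum
    have hrem : ∀ n : ℕ, 1 ≤ α * (n:ℝ) →
        ENNReal.ofReal (h ^ n * Real.Gamma α ^ n / Real.Gamma (α * n)) *
          (∫⁻ u in Ioo 0 t₀, ENNReal.ofReal ((t₀ - u) ^ (α * n - 1)) * G u) ≤
        ENNReal.ofReal (α * Ig * (((n:ℝ) + 1) * y ^ n / Real.Gamma (α * n + 1))) := by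
      intro n hαn1
      have hαn : 0 < α * n := by linarith
      have hΓαn := Real.Gamma_pos_of_pos hαn
      have hΓαn1 := Real.Gamma_pos_of_pos (show (0:ℝ) < α * n + 1 by linarith)
      have hbCn : 0 ≤ h ^ n * Real.Gamma α ^ n / Real.Gamma (α * n) := by positivity
      have hMtr : 0 ≤ Mt ^ (α * n - 1) := Real.rpow_nonneg hMt0 _
      have hK : (∫⁻ u in Ioo 0 t₀, ENNReal.ofReal ((t₀ - u) ^ (α * n - 1)) * G u) ≤
          ENNReal.ofReal (Mt ^ (α * n - 1)) * ENNReal.ofReal Ig := by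
        rw [← hGint, ← lintegral_const_mul' _ _ ENNReal.ofReal_ne_top]
        apply lintegral_mono_ae
        filter_upwards [ae_restrict_mem measurableSet_Ioo] with u hu
        apply _root_.mul_le_mul_left
        apply ENNReal.ofReal_le_ofReal
        apply Real.rpow_le_rpow (by linarith [hu.2]) (by linarith [hu.1, ht₀Mt]) (by linarith)
      have hreal : h ^ n * Real.Gamma α ^ n / Real.Gamma (α * n) * (Mt ^ (α * n - 1) * Ig) ≤
          α * Ig * (((n:ℝ) + 1) * y ^ n / Real.Gamma (α * n + 1)) := by
        have hMtpow : Mt ^ (α * n - 1) ≤ (Mt ^ α) ^ n := by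
          calc Mt ^ (α * n - 1) ≤ Mt ^ (α * n) :=
              Real.rpow_le_rpow_of_exponent_le hMt1 (by linarith)
            _ = (Mt ^ α) ^ n := by rw [← Real.rpow_natCast (Mt ^ α) n, ← Real.rpow_mul hMt0]
        have hyn : h ^ n * Real.Gamma α ^ n * (Mt ^ α) ^ n = y ^ n := by
          rw [hydef, mul_pow, mul_pow]
        have hΓ1 : Real.Gamma (α * n + 1) = α * n * Real.Gamma (α * n) :=
          Real.Gamma_add_one hαn.ne'
        have step1 : h ^ n * Real.Gamma α ^ n / Real.Gamma (α * n) * (Mt ^ (α * n - 1) * Ig) ≤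
            h ^ n * Real.Gamma α ^ n / Real.Gamma (α * n) * ((Mt ^ α) ^ n * Ig) := by
          apply mul_le_mul_of_nonneg_left _ hbCn
          exact mul_le_mul_of_nonneg_right hMtpow hIg0
        have step2 : h ^ n * Real.Gamma α ^ n / Real.Gamma (α * n) * ((Mt ^ α) ^ n * Ig)
            = α * Ig * ((n:ℝ) * y ^ n / Real.Gamma (α * n + 1)) := by
          rw [hΓ1, ← hyn]
          field_simp
          have hn0 : (n:ℝ) ≠ 0 := fun h0 => by simp [h0] at hαn
          rw [eq_div_iff hn0]; ring
        have step3 : α * Ig * ((n:ℝ) * y ^ n / Real.Gamma (α * n + 1)) ≤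
            α * Ig * (((n:ℝ) + 1) * y ^ n / Real.Gamma (α * n + 1)) := by
          gcongr
          linarith
        linarith
      calc ENNReal.ofReal (h ^ n * Real.Gamma α ^ n / Real.Gamma (α * n)) *
            (∫⁻ u in Ioo 0 t₀, ENNReal.ofReal ((t₀ - u) ^ (α * n - 1)) * G u)
          ≤ ENNReal.ofReal (h ^ n * Real.Gamma α ^ n / Real.Gamma (α * n)) *
            (ENNReal.ofReal (Mt ^ (α * n - 1)) * ENNReal.ofReal Ig) := mul_le_mul_right hK _
        _ = ENNReal.ofReal (h ^ n * Real.Gamma α ^ n / Real.Gamma (α * n) *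
              (Mt ^ (α * n - 1) * Ig)) := by
            rw [← ENNReal.ofReal_mul hMtr, ← ENNReal.ofReal_mul hbCn]
        _ ≤ _ := ENNReal.ofReal_le_ofReal hreal
    set N0 := ⌈1/α⌉₊ + 1 with hN0def
    have hN0 : ∀ n : ℕ, N0 ≤ n → 1 ≤ α * (n:ℝ) := by
      intro n hn
      have h1 : (1/α : ℝ) ≤ N0 := by
        refine (Nat.le_ceil _).trans ?_
        rw [hN0def]; push_cast; linarith
      have h2 : (N0:ℝ) ≤ n := by exact_mod_cast hn
      calc (1:ℝ) = α * (1/α) := by field_simp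
        _ ≤ α * n := mul_le_mul_of_nonneg_left (h1.trans h2) hα0.le
    have hfinal : ∀ n : ℕ, N0 ≤ n → g t₀ ≤ c * E +
        α * Ig * (((n:ℝ) + 1) * y ^ n / Real.Gamma (α * n + 1)) := by
      intro n hn
      have hn1 : 1 ≤ n := le_trans (by omega) hn
      have hΓαn1 := Real.Gamma_pos_of_pos
        (show (0:ℝ) < α * n + 1 by positivity)
      have hρ0 : 0 ≤ α * Ig * (((n:ℝ) + 1) * y ^ n / Real.Gamma (α * n + 1)) := by positivity
      have h1 := hP n hn1 t₀ ⟨ht₀.1, le_refl t₀⟩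
      have h2 := h1.trans (add_le_add (ENNReal.ofReal_le_ofReal (hpartial n))
        (hrem n (hN0 n hn)))
      rw [← ENNReal.ofReal_add (by positivity) hρ0] at h2
      exact (ENNReal.ofReal_le_ofReal_iff (by positivity)).mp h2
    have hlim : Tendsto (fun n : ℕ => c * E +
        α * Ig * (((n:ℝ) + 1) * y ^ n / Real.Gamma (α * n + 1))) atTop (nhds (c * E)) := by
      have h1 := (grw_tendsto α y hα0 hy0).const_mul (α * Ig)
      have h2 := tendsto_const_nhds (x := c * E) (f := atTop (α := ℕ)) |>.add h1
      simpa [mul_assoc] using h2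
    exact ge_of_tendsto hlim (eventually_atTop.mpr ⟨N0, hfinal⟩)
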